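/- Fix an integer n ≥ 1, let H = ℍ[ℚ; −11, −11(11n − 1)], let ‡ be the ℚ-linear involution of H given by (x + y·i + z·j + w·ij)‡ = x + y·i + z·j − w·ij, let O be the ℤ-submodule of H spanned by 1, (1 + i)/2, (i + j)/11, (11j + ij)/22 (a subring of H with O‡ = O), let O⁺ = {x ∈ O : x‡ = x}, and let 𝒲 be the subgroup of invertible 2×2 matrices over H generated by the Cohn matrices W(α), α ∈ O⁺. Then for every γ = [[a, b], [c, d]] ∈ 𝒲, setting κ = c·j·conj(d) − d·j·conj(c), κ' = a·j·conj(b) − b·j·conj(a) (both of which are scalar), and ξ = a·j·conj(d) − b·j·conj(c), the rational number B := (1/2)·(−22·κ' − 66·κ + tr((−10i + j)·conj(ξ))) satisfies B ∈ 11(11n − 1) + 22(11n − 1)ℤ; in particular |B| ≥ 11(11n − 1). -/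

import Mathlib

open Quaternion
open scoped Quaternion

/-- The Cohn matrix `W(α) = [[α, 1], [−1, 0]]` as an invertible 2×2 matrix over a ring,
with inverse `[[0, −1], [1, α]]`. -/
def CohnUnit {A : Type*} [Ring A] (α : A) : (Matrix (Fin 2) (Fin 2) A)ˣ where
  val := !![α, 1; -1, 0]
  inv := !![0, -1; 1, α]
  val_inv := by
    ext i j
    fin_cases i <;> fin_cases j <;>
      simp [Matrix.mul_apply, Fin.sum_univ_succ, Matrix.one_apply]
  inv_val := by
    ext i j
    fin_cases i <;> fin_cases j <;>
      simp [Matrix.mul_apply, Fin.sum_univ_succ, Matrix.one_apply]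

/-- The orthogonal involution `‡ : x + yi + zj + wij ↦ x + yi + zj − wij`. -/
def dag {c₁ c₂ : ℚ} (q : ℍ[ℚ, c₁, c₂]) : ℍ[ℚ, c₁, c₂] :=
  ⟨q.re, q.imI, q.imJ, -q.imK⟩

/-- The `‡`-order `ℤ ⊕ ℤ(1+i)/2 ⊕ ℤ(i+j)/11 ⊕ ℤ(11j+ij)/22` of
`ℍ[ℚ; −11, −11(11n−1)]`. -/
noncomputable def order (n : ℕ) : Submodule ℤ ℍ[ℚ, -11, -11 * (11 * (n : ℚ) - 1)] :=
  Submodule.span ℤ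
    ({1, ⟨1 / 2, 1 / 2, 0, 0⟩, ⟨0, 1 / 11, 1 / 11, 0⟩, ⟨0, 0, 1 / 2, 1 / 22⟩} :
      Set ℍ[ℚ, -11, -11 * (11 * (n : ℚ) - 1)])

/-- `O⁺`: the `‡`-symmetric part of the order, which equals the `ℤ`-span of
`1, (1+i)/2, (i+j)/11`. -/
noncomputable def orderPlus (n : ℕ) :
    Submodule ℤ ℍ[ℚ, -11, -11 * (11 * (n : ℚ) - 1)] :=
  Submodule.span ℤ
    ({1, ⟨1 / 2, 1 / 2, 0, 0⟩, ⟨0, 1 / 11, 1 / 11, 0⟩} :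
      Set ℍ[ℚ, -11, -11 * (11 * (n : ℚ) - 1)])

/-- `𝒲`: the subgroup of invertible 2×2 matrices generated by the Cohn matrices `W(α)`,
`α ∈ O⁺`. -/
noncomputable def CohnSubgroup (n : ℕ) :
    Subgroup (Matrix (Fin 2) (Fin 2) ℍ[ℚ, -11, -11 * (11 * (n : ℚ) - 1)])ˣ :=
  Subgroup.closure {γ | ∃ α ∈ orderPlus n, γ = CohnUnit α}

/-! ### Auxiliary machinery for `forbidden_ball_neg11` -/

section CohnAux

section star_lemmas
variable {R : Type*} [Ring R] [StarRing R]

lemma cohn_starxi (a b c d J : R) (hJ : star J = -J) :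
    c * J * star b - d * J * star a = star (a * J * star d - b * J * star c) := by
  simp only [star_sub, star_mul, star_star, hJ]
  noncomm_ring

lemma cohn_fwd_kap' (α a b c d J : R) :
    (α * a + c) * J * star (α * b + d) - (α * b + d) * J * star (α * a + c)
      = α * (a * J * star b - b * J * star a) * star α
        + α * (a * J * star d - b * J * star c)
        + (c * J * star b - d * J * star a) * star α
        + (c * J * star d - d * J * star c) := by
  simp only [star_add, star_mul]
  noncomm_ring

lemma cohn_fwd_xi (α a b c d J : R) :
    (α * a + c) * J * star (-b) - (α * b + d) * J * star (-a)
      = -(α * (a * J * star b - b * J * star a))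
        - (c * J * star b - d * J * star a) := by
  simp only [star_neg]
  noncomm_ring

lemma cohn_bwd_xi (α a b c d J : R) :
    (-c) * J * star (b + α * d) - (-d) * J * star (a + α * c)
      = -(c * J * star b - d * J * star a)
        - (c * J * star d - d * J * star c) * star α := by
  simp only [star_add, star_mul]
  noncomm_ring

lemma cohn_bwd_kap (α a b c d J : R) :
    (a + α * c) * J * star (b + α * d) - (b + α * d) * J * star (a + α * c)
      = (a * J * star b - b * J * star a)
        + (a * J * star d - b * J * star c) * star α
        + α * (c * J * star b - d * J * star a)
        + α * (c * J * star d - d * J * star c) * star α := by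
  simp only [star_add, star_mul]
  noncomm_ring

end star_lemmas

section matrix_entries
variable {A : Type*} [Ring A]

lemma cohn_mul_00 (α : A) (γ : (Matrix (Fin 2) (Fin 2) A)ˣ) :
    (CohnUnit α * γ).1 0 0 = α * γ.1 0 0 + γ.1 1 0 := by
  simp [CohnUnit, Units.val_mul, Matrix.mul_apply, Fin.sum_univ_two]

lemma cohn_mul_01 (α : A) (γ : (Matrix (Fin 2) (Fin 2) A)ˣ) :
    (CohnUnit α * γ).1 0 1 = α * γ.1 0 1 + γ.1 1 1 := by
  simp [CohnUnit, Units.val_mul, Matrix.mul_apply, Fin.sum_univ_two]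

lemma cohn_mul_10 (α : A) (γ : (Matrix (Fin 2) (Fin 2) A)ˣ) :
    (CohnUnit α * γ).1 1 0 = -γ.1 0 0 := by
  simp [CohnUnit, Units.val_mul, Matrix.mul_apply, Fin.sum_univ_two]

lemma cohn_mul_11 (α : A) (γ : (Matrix (Fin 2) (Fin 2) A)ˣ) :
    (CohnUnit α * γ).1 1 1 = -γ.1 0 1 := by
  simp [CohnUnit, Units.val_mul, Matrix.mul_apply, Fin.sum_univ_two]

lemma cohn_inv_mul_00 (α : A) (γ : (Matrix (Fin 2) (Fin 2) A)ˣ) :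
    ((CohnUnit α)⁻¹ * γ).1 0 0 = -γ.1 1 0 := by
  simp [CohnUnit, Units.val_mul, Matrix.mul_apply, Fin.sum_univ_two]

lemma cohn_inv_mul_01 (α : A) (γ : (Matrix (Fin 2) (Fin 2) A)ˣ) :
    ((CohnUnit α)⁻¹ * γ).1 0 1 = -γ.1 1 1 := by
  simp [CohnUnit, Units.val_mul, Matrix.mul_apply, Fin.sum_univ_two]

lemma cohn_inv_mul_10 (α : A) (γ : (Matrix (Fin 2) (Fin 2) A)ˣ) :
    ((CohnUnit α)⁻¹ * γ).1 1 0 = γ.1 0 0 + α * γ.1 1 0 := by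
  simp [CohnUnit, Units.val_mul, Matrix.mul_apply, Fin.sum_univ_two]

lemma cohn_inv_mul_11 (α : A) (γ : (Matrix (Fin 2) (Fin 2) A)ˣ) :
    ((CohnUnit α)⁻¹ * γ).1 1 1 = γ.1 0 1 + α * γ.1 1 1 := by
  simp [CohnUnit, Units.val_mul, Matrix.mul_apply, Fin.sum_univ_two]

end matrix_entries

lemma orderPlus_coords {n : ℕ} {α : ℍ[ℚ, -11, -11 * (11 * (n : ℚ) - 1)]}
    (h : α ∈ orderPlus n) :
    ∃ u v w : ℤ, α = ⟨(u : ℚ) + v / 2, (v : ℚ) / 2 + w / 11, (w : ℚ) / 11, 0⟩ := by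
  rw [orderPlus, Submodule.mem_span_insert] at h
  obtain ⟨u, z, hz, rfl⟩ := h
  rw [Submodule.mem_span_insert] at hz
  obtain ⟨v, z', hz', rfl⟩ := hz
  rw [Submodule.mem_span_singleton] at hz'
  obtain ⟨w, rfl⟩ := hz'
  refine ⟨u, v, w, ?_⟩
  ext <;>
    simp [QuaternionAlgebra.re_smul, QuaternionAlgebra.imI_smul, QuaternionAlgebra.imJ_smul,
      QuaternionAlgebra.imK_smul, zsmul_eq_mul] <;> ring

/-- The auxiliary `j`-element. -/
def Jq (n : ℕ) : ℍ[ℚ, -11, -11 * (11 * (n : ℚ) - 1)] := ⟨0, 0, 1, 0⟩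

lemma star_Jq (n : ℕ) : star (Jq n) = -(Jq n) := by ext <;> simp [Jq]

/-- The inductive invariant for entries of elements of the Cohn group. -/
def GoodEnt (n : ℕ) (a b c d : ℍ[ℚ, -11, -11 * (11 * (n : ℚ) - 1)]) : Prop :=
  ∃ K K' Z e f : ℤ,
    c * Jq n * star d - d * Jq n * star c
      = ⟨2 * (11 * (n : ℚ) - 1) * K, 0, 0, 0⟩ ∧
    a * Jq n * star b - b * Jq n * star a
      = ⟨2 * (11 * (n : ℚ) - 1) * K', 0, 0, 0⟩ ∧
    a * Jq n * star d - b * Jq n * star c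
      = ⟨(11 * (n : ℚ) - 1) * (2 * Z + 11 * f + 2 * e),
          (11 * (n : ℚ) - 1) * (2 * Z + 11 * f) / 11,
          1 + 2 * (11 * (n : ℚ) - 1) * Z / 11, 0⟩

lemma goodEnt_fwd (n : ℕ) (u v w : ℤ) (a b c d : ℍ[ℚ, -11, -11 * (11 * (n : ℚ) - 1)])
    (h : GoodEnt n a b c d) :
    GoodEnt n
      ((⟨(u : ℚ) + v / 2, (v : ℚ) / 2 + w / 11, (w : ℚ) / 11, 0⟩ :
          ℍ[ℚ, -11, -11 * (11 * (n : ℚ) - 1)]) * a + c)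
      ((⟨(u : ℚ) + v / 2, (v : ℚ) / 2 + w / 11, (w : ℚ) / 11, 0⟩ :
          ℍ[ℚ, -11, -11 * (11 * (n : ℚ) - 1)]) * b + d)
      (-a) (-b) := by
  obtain ⟨K, K', Z, e, f, hκ, hκ', hξ⟩ := h
  have hξ' : c * Jq n * star b - d * Jq n * star a
      = ⟨(11 * (n : ℚ) - 1) * (2 * Z + 11 * f + 2 * e),
          -((11 * (n : ℚ) - 1) * (2 * Z + 11 * f) / 11),
          -(1 + 2 * (11 * (n : ℚ) - 1) * Z / 11), 0⟩ := by
    rw [cohn_starxi a b c d _ (star_Jq n), hξ]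
    ext <;> simp
  refine ⟨K', (u^2 + u*v + 3*v^2 + v*w + (n:ℤ)*w^2) * K' + K
      + (u*(2*Z+11*f+2*e) + v*e - w*(1+f+2*(n:ℤ)*Z)),
      -w*K' + Z, (5*v+w-u)*K' - (2*Z+11*f) - e, -v*K' + f, ?_, ?_, ?_⟩
  · show (-a) * Jq n * star (-b) - (-b) * Jq n * star (-a) = _
    simpa using hκ'
  · rw [cohn_fwd_kap', hκ, hκ', hξ, hξ']
    ext <;> simp [QuaternionAlgebra.re_mul, QuaternionAlgebra.imI_mul,
      QuaternionAlgebra.imJ_mul, QuaternionAlgebra.imK_mul] <;> push_cast <;> ring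
  · rw [cohn_fwd_xi, hκ', hξ']
    ext <;> simp [QuaternionAlgebra.re_mul, QuaternionAlgebra.imI_mul,
      QuaternionAlgebra.imJ_mul, QuaternionAlgebra.imK_mul] <;> push_cast <;> ring

lemma goodEnt_bwd (n : ℕ) (u v w : ℤ) (a b c d : ℍ[ℚ, -11, -11 * (11 * (n : ℚ) - 1)])
    (h : GoodEnt n a b c d) :
    GoodEnt n (-c) (-d)
      (a + (⟨(u : ℚ) + v / 2, (v : ℚ) / 2 + w / 11, (w : ℚ) / 11, 0⟩ :
          ℍ[ℚ, -11, -11 * (11 * (n : ℚ) - 1)]) * c)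
      (b + (⟨(u : ℚ) + v / 2, (v : ℚ) / 2 + w / 11, (w : ℚ) / 11, 0⟩ :
          ℍ[ℚ, -11, -11 * (11 * (n : ℚ) - 1)]) * d) := by
  obtain ⟨K, K', Z, e, f, hκ, hκ', hξ⟩ := h
  have hξ' : c * Jq n * star b - d * Jq n * star a
      = ⟨(11 * (n : ℚ) - 1) * (2 * Z + 11 * f + 2 * e),
          -((11 * (n : ℚ) - 1) * (2 * Z + 11 * f) / 11),
          -(1 + 2 * (11 * (n : ℚ) - 1) * Z / 11), 0⟩ := by
    rw [cohn_starxi a b c d _ (star_Jq n), hξ]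
    ext <;> simp
  refine ⟨K' + (u^2 + u*v + 3*v^2 + v*w + (n:ℤ)*w^2) * K
      + (u*(2*Z+11*f+2*e) + v*((2*Z+11*f)+e) + w*(1+f+2*(n:ℤ)*Z)),
      K, Z + w*K, -(2*Z+11*f) - e - (u+6*v+w)*K, f + v*K, ?_, ?_, ?_⟩
  · rw [cohn_bwd_kap, hκ, hκ', hξ, hξ']
    ext <;> simp [QuaternionAlgebra.re_mul, QuaternionAlgebra.imI_mul,
      QuaternionAlgebra.imJ_mul, QuaternionAlgebra.imK_mul] <;> push_cast <;> ring
  · show (-c) * Jq n * star (-d) - (-d) * Jq n * star (-c) = _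
    simpa using hκ
  · rw [cohn_bwd_xi, hκ, hξ']
    ext <;> simp [QuaternionAlgebra.re_mul, QuaternionAlgebra.imI_mul,
      QuaternionAlgebra.imJ_mul, QuaternionAlgebra.imK_mul] <;> push_cast <;> ring

lemma goodEnt_of_mem (n : ℕ)
    (γ : (Matrix (Fin 2) (Fin 2) ℍ[ℚ, -11, -11 * (11 * (n : ℚ) - 1)])ˣ)
    (hγ : γ ∈ CohnSubgroup n) :
    GoodEnt n (γ.1 0 0) (γ.1 0 1) (γ.1 1 0) (γ.1 1 1) := by
  rw [CohnSubgroup] at hγ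
  induction hγ using Subgroup.closure_induction_left with
  | one =>
    refine ⟨0, 0, 0, 0, 0, ?_, ?_, ?_⟩ <;>
      · simp only [Units.val_one, Matrix.one_apply]
        norm_num
        ext <;> simp [Jq]
  | mul_left x hx y hy ih =>
    obtain ⟨α, hα, rfl⟩ := hx
    obtain ⟨u, v, w, rfl⟩ := orderPlus_coords hα
    rw [cohn_mul_00, cohn_mul_01, cohn_mul_10, cohn_mul_11]
    exact goodEnt_fwd n u v w _ _ _ _ ih
  | inv_mul_cancel x hx y hy ih =>
    obtain ⟨α, hα, rfl⟩ := hx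
    obtain ⟨u, v, w, rfl⟩ := orderPlus_coords hα
    rw [cohn_inv_mul_00, cohn_inv_mul_01, cohn_inv_mul_10, cohn_inv_mul_11]
    exact goodEnt_bwd n u v w _ _ _ _ ih

end CohnAux

/-- The pairing of the forbidden ball with data `(22, 66, −10i + j)` against any sphere
`γ.S_j`, `γ ∈ 𝒲`, lies in `11(11n−1) + 22(11n−1)ℤ`; in particular its absolute value is
at least `11(11n−1)`. -/
theorem forbidden_ball_neg11 (n : ℕ) (hn : 1 ≤ n)
    (hfix : orderPlus n = {x ∈ order n | dag x = x})
    (γ : (Matrix (Fin 2) (Fin 2) ℍ[ℚ, -11, -11 * (11 * (n : ℚ) - 1)])ˣ)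
    (hγ : γ ∈ CohnSubgroup n)
    (a b c d : ℍ[ℚ, -11, -11 * (11 * (n : ℚ) - 1)])
    (ha : a = γ.1 0 0) (hb : b = γ.1 0 1) (hc : c = γ.1 1 0) (hd : d = γ.1 1 1)
    (j ρ : ℍ[ℚ, -11, -11 * (11 * (n : ℚ) - 1)])
    (hj : j = ⟨0, 0, 1, 0⟩) (hρ : ρ = ⟨0, -10, 1, 0⟩)
    (κ κ' ξ B : ℍ[ℚ, -11, -11 * (11 * (n : ℚ) - 1)])
    (hκ : κ = c * j * star d - d * j * star c)
    (hκ' : κ' = a * j * star b - b * j * star a)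
    (hξ : ξ = a * j * star d - b * j * star c)
    (hB : B = (2 : ℚ)⁻¹ •
      (-(22 * κ') - 66 * κ + (ρ * star ξ + star (ρ * star ξ)))) :
    ∃ q : ℚ, B = (q : ℍ[ℚ, -11, -11 * (11 * (n : ℚ) - 1)]) ∧
      (∃ m : ℤ, q = 11 * (11 * n - 1) + 22 * (11 * n - 1) * m) ∧
      11 * (11 * (n : ℚ) - 1) ≤ |q| := by

  subst ha hb hc hd hj hρ hκ hκ' hξ hB
  obtain ⟨K, K', Z, e, f, h1, h2, h3⟩ := goodEnt_of_mem n γ hγ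
  simp only [Jq] at h1 h2 h3
  refine ⟨11 * (11 * (n : ℚ) - 1)
      + 22 * (11 * (n : ℚ) - 1) * ((-K' - 3*K - 5*f + ((n:ℤ)-1)*Z : ℤ) : ℚ), ?_,
      ⟨-K' - 3*K - 5*f + ((n:ℤ)-1)*Z, rfl⟩, ?_⟩
  · rw [h1, h2, h3,
      show (22 : ℍ[ℚ, -11, -11 * (11 * (n : ℚ) - 1)])
        = ((22 : ℚ) : ℍ[ℚ, -11, -11 * (11 * (n : ℚ) - 1)]) from rfl,
      show (66 : ℍ[ℚ, -11, -11 * (11 * (n : ℚ) - 1)])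
        = ((66 : ℚ) : ℍ[ℚ, -11, -11 * (11 * (n : ℚ) - 1)]) from rfl]
    ext <;>
      simp [QuaternionAlgebra.re_mul, QuaternionAlgebra.imI_mul,
        QuaternionAlgebra.imJ_mul, QuaternionAlgebra.imK_mul, -QuaternionAlgebra.coe_ofNat] <;>
      push_cast <;> ring
  · have hT : (0 : ℚ) < 11 * (n : ℚ) - 1 := by
      have h1n : (1 : ℚ) ≤ (n : ℚ) := by exact_mod_cast hn
      linarith
    set m : ℤ := -K' - 3*K - 5*f + ((n:ℤ)-1)*Z with hm
    have habs : (1 : ℚ) ≤ |1 + 2 * (m : ℚ)| := by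
      have h1 : (1 : ℤ) ≤ |1 + 2 * m| := Int.one_le_abs (by omega)
      have : ((1 : ℤ) : ℚ) ≤ |((1 + 2 * m : ℤ) : ℚ)| := by
        rw [← Int.cast_abs]
        exact_mod_cast h1
      push_cast at this
      linarith [this]
    have hq : 11 * (11 * (n : ℚ) - 1) + 22 * (11 * (n : ℚ) - 1) * (m : ℚ)
        = (11 * (11 * (n : ℚ) - 1)) * (1 + 2 * (m : ℚ)) := by ring
    rw [hq, abs_mul, abs_of_pos (by linarith : (0:ℚ) < 11 * (11 * (n : ℚ) - 1))]
    nlinarith [habs, hT]
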